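/- Let a ≤ 0 and b ≥ 0 be real numbers, at least one of which is nonzero. Let G be a connected simple graph on at least two vertices, let u1, u2 be two distinct non-adjacent vertices of G, and let G + u1u2 be the graph obtained from G by adding the edge u1u2. Then Gut_{a,b}(G + u1u2) < Gut_{a,b}(G). -/
import Mathlib


open scoped Classical

lemma aux_degree_pos {V : Type*} [Fintype V] {G : SimpleGraph V}
    (hG : G.Connected) (hcard : 2 ≤ Fintype.card V) (v : V) : 0 < G.degree v := by
  rw [G.degree_pos_iff_exists_adj v]
  have : Nontrivial V := Fintype.one_lt_card_iff_nontrivial.mp hcard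
  obtain ⟨w, hw⟩ := exists_ne v
  obtain ⟨p⟩ := hG.preconnected v w
  cases p with
  | nil => exact absurd rfl hw.symm
  | cons h _ => exact ⟨_, h⟩

lemma aux_degree_mono {V : Type*} [Fintype V] {G G' : SimpleGraph V}
    (h : G ≤ G') (v : V) : G.degree v ≤ G'.degree v := by
  apply Finset.card_le_card
  intro x hx
  rw [SimpleGraph.mem_neighborFinset] at *
  exact h hx

lemma aux_degree_strict {V : Type*} [Fintype V] {G G' : SimpleGraph V}
    (h : G ≤ G') {v w : V} (h1 : G'.Adj v w) (h2 : ¬ G.Adj v w) :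
    G.degree v < G'.degree v := by
  apply Finset.card_lt_card
  rw [Finset.ssubset_iff_of_subset (fun x hx => by
    rw [SimpleGraph.mem_neighborFinset] at *; exact h hx)]
  exact ⟨w, by rwa [SimpleGraph.mem_neighborFinset], by
    rw [SimpleGraph.mem_neighborFinset]; exact h2⟩


/-- The general Gutman index `Gut_{a,b}(G)`: the sum, over all unordered pairs of
distinct vertices `{u, v}`, of `(d(u)·d(v))^a · (dist(u,v))^b` (real powers). -/
noncomputable def gut {V : Type*} [Fintype V] (G : SimpleGraph V) (a b : ℝ) : ℝ :=
  ∑ e ∈ Finset.univ.filter (fun e : Sym2 V => ¬ e.IsDiag),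
    Sym2.lift ⟨fun u v =>
      ((G.degree u : ℝ) * (G.degree v : ℝ)) ^ a * ((G.dist u v : ℝ)) ^ b,
      fun u v => by
        show ((G.degree u : ℝ) * (G.degree v : ℝ)) ^ a * ((G.dist u v : ℝ)) ^ b
            = ((G.degree v : ℝ) * (G.degree u : ℝ)) ^ a * ((G.dist v u : ℝ)) ^ b
        rw [mul_comm ((G.degree u : ℝ)), SimpleGraph.dist_comm]⟩ e

set_option maxHeartbeats 1000000 in
theorem stmt5 {V : Type*} [Fintype V] (G : SimpleGraph V)
    (hcard : 2 ≤ Fintype.card V) (hG : G.Connected)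
    (a b : ℝ) (ha : a ≤ 0) (hb : 0 ≤ b) (hab : a ≠ 0 ∨ b ≠ 0)
    (u1 u2 : V) (hne : u1 ≠ u2) (hadj : ¬ G.Adj u1 u2) :
    gut (G ⊔ SimpleGraph.fromEdgeSet {s(u1, u2)}) a b < gut G a b := by
  set G' := G ⊔ SimpleGraph.fromEdgeSet {s(u1, u2)} with hG'
  have hle : G ≤ G' := le_sup_left
  have hadj' : G'.Adj u1 u2 := by
    rw [hG']
    exact Or.inr (by simp [SimpleGraph.fromEdgeSet_adj, hne])
  clear_value G'
  clear hG'
  have hconn' : G'.Connected := hG.mono hle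
  -- degree facts
  have dpos : ∀ v, (0:ℝ) < (G.degree v : ℝ) := fun v => by
    exact_mod_cast aux_degree_pos hG hcard v
  have dpos' : ∀ v, (0:ℝ) < (G'.degree v : ℝ) := fun v => by
    exact_mod_cast aux_degree_pos hconn' hcard v
  have ddle : ∀ v, G.degree v ≤ G'.degree v := aux_degree_mono hle
  have dstrict : G.degree u1 < G'.degree u1 := aux_degree_strict hle hadj' hadj
  -- distance facts
  have distle : ∀ x y : V, G'.dist x y ≤ G.dist x y := fun x y =>
    SimpleGraph.Reachable.dist_anti hle (hG.preconnected x y)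
  -- per-pair bounds
  have key : ∀ x y : V, x ≠ y →
      ((G'.degree x : ℝ) * (G'.degree y : ℝ)) ^ a * ((G'.dist x y : ℝ)) ^ b ≤
      ((G.degree x : ℝ) * (G.degree y : ℝ)) ^ a * ((G.dist x y : ℝ)) ^ b := by
    intro x y hxy
    have h1 : ((G'.degree x : ℝ) * (G'.degree y : ℝ)) ^ a ≤
        ((G.degree x : ℝ) * (G.degree y : ℝ)) ^ a := by
      apply Real.rpow_le_rpow_of_nonpos (mul_pos (dpos x) (dpos y)) _ ha
      exact_mod_cast Nat.mul_le_mul (ddle x) (ddle y)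
    have h2 : ((G'.dist x y : ℝ)) ^ b ≤ ((G.dist x y : ℝ)) ^ b := by
      apply Real.rpow_le_rpow (by positivity) _ hb
      exact_mod_cast distle x y
    exact mul_le_mul h1 h2 (Real.rpow_nonneg (by positivity) b)
      (Real.rpow_nonneg (mul_pos (dpos x) (dpos y)).le a)
  unfold gut
  apply Finset.sum_lt_sum
  · intro e he
    induction e using Sym2.ind with
    | _ x y =>
      rw [Finset.mem_filter, Sym2.mk_isDiag_iff] at he
      simpa using key x y he.2
  · refine ⟨s(u1, u2), by simp [Sym2.mk_isDiag_iff, hne], ?_⟩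
    simp only [Sym2.lift_mk]
    have hd1' : G'.dist u1 u2 = 1 := SimpleGraph.dist_eq_one_iff_adj.mpr hadj'
    have hd2 : 2 ≤ G.dist u1 u2 := by
      have h0 : G.dist u1 u2 ≠ 0 := (hG.pos_dist_of_ne hne).ne'
      have h1 : G.dist u1 u2 ≠ 1 := fun h => hadj (SimpleGraph.dist_eq_one_iff_adj.mp h)
      omega
    have h1 : ((G'.degree u1 : ℝ) * (G'.degree u2 : ℝ)) ^ a ≤
        ((G.degree u1 : ℝ) * (G.degree u2 : ℝ)) ^ a := by
      apply Real.rpow_le_rpow_of_nonpos (mul_pos (dpos u1) (dpos u2)) _ ha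
      exact_mod_cast Nat.mul_le_mul (ddle u1) (ddle u2)
    by_cases hb0 : b = 0
    · have ha0 : a < 0 := lt_of_le_of_ne ha (by tauto)
      rw [hb0, Real.rpow_zero, Real.rpow_zero, mul_one, mul_one]
      apply Real.rpow_lt_rpow_of_neg (mul_pos (dpos u1) (dpos u2)) _ ha0
      exact mul_lt_mul (by exact_mod_cast dstrict) (by exact_mod_cast ddle u2)
        (dpos u2) (dpos' u1).le
    · have hbpos : 0 < b := lt_of_le_of_ne hb (Ne.symm hb0)
      have h2 : ((G'.dist u1 u2 : ℝ)) ^ b < ((G.dist u1 u2 : ℝ)) ^ b := by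
        rw [hd1']
        norm_num
        rw [Real.one_lt_rpow_iff_of_pos (by positivity)]
        left
        exact ⟨by exact_mod_cast hd2, hbpos⟩
      exact mul_lt_mul' h1 h2 (Real.rpow_nonneg (by positivity) b)
        (Real.rpow_pos_of_pos (mul_pos (dpos u1) (dpos u2)) a)
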